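/- Let d = 13. The family of ideals I_B = (x₆² + ℓ₁(B), x₆x₇ + ℓ₂(B), ..., x₁₃² + ℓ₃₆(B)) + (x₁,...,x₅)∩m² + m³ ⊆ ℂ[x₁,...,x₁₃], parametrized by 36×5 complex matrices B (where ℓ_r(B) = b_{r,1}x₁ + ... + b_{r,5}x₅, m is the maximal ideal at the origin, and the 36 quadrics run over all monomials x_i x_j with 6 ≤ i ≤ j ≤ 13), consists of ideals I_B with dim_ℂ ℂ[x₁,...,x₁₃]/I_B = 14, and {1, x₁, ..., x₁₃} is a ℂ-basis of the quotient. -/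

import Mathlib

open MvPolynomial

/-- The linear form ℓ_{(i,j)}(B) = b_{(i,j),1}x₁ + ... + b_{(i,j),5}x₅. -/
noncomputable def linPart (B : Fin 13 → Fin 13 → Fin 5 → ℂ) (i j : Fin 13) :
    MvPolynomial (Fin 13) ℂ :=
  ∑ t : Fin 5, C (B i j t) * X (Fin.castLE (by norm_num) t)

/-- The ideal I_B = (x_i x_j + ℓ_{(i,j)}(B) : 6 ≤ i ≤ j ≤ 13)
  + (x₁,...,x₅)∩m² + m³ (indices 0-based: x₆,...,x₁₃ are X 5,...,X 12). -/
noncomputable def idealB (B : Fin 13 → Fin 13 → Fin 5 → ℂ) :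
    Ideal (MvPolynomial (Fin 13) ℂ) :=
  Ideal.span
    ({f | ∃ i j : Fin 13, 5 ≤ i.val ∧ i ≤ j ∧ f = X i * X j + linPart B i j} ∪
     {f | ∃ i j : Fin 13, i.val < 5 ∧ f = X i * X j} ∪
     {f | ∃ i j k : Fin 13, f = X i * X j * X k})

/-- Symmetrized coefficient matrix. -/
noncomputable def Bs (B : Fin 13 → Fin 13 → Fin 5 → ℂ) (i j : Fin 13) : Fin 5 → ℂ :=
  if i ≤ j then B i j else B j i

lemma Bs_comm (B : Fin 13 → Fin 13 → Fin 5 → ℂ) (i j : Fin 13) : Bs B i j = Bs B j i := by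
  unfold Bs
  by_cases h1 : i ≤ j <;> by_cases h2 : j ≤ i <;> simp [h1, h2]
  · exact le_antisymm h1 h2 ▸ rfl
  · exact absurd (le_total i j) (by simp [h1, h2])

/-- The bilinear twisting form. -/
noncomputable def Qb (B : Fin 13 → Fin 13 → Fin 5 → ℂ) (v w : Fin 13 → ℂ) : Fin 13 → ℂ :=
  fun k => if h : (k : ℕ) < 5 then
    -∑ i : Fin 13, ∑ j : Fin 13,
      (if 5 ≤ (i : ℕ) ∧ 5 ≤ (j : ℕ) then Bs B i j ⟨k, h⟩ else 0) * v i * w j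
  else 0

variable {B : Fin 13 → Fin 13 → Fin 5 → ℂ}

lemma Qb_add_left (v v' w : Fin 13 → ℂ) : Qb B (v + v') w = Qb B v w + Qb B v' w := by
  funext k
  by_cases h : (k : ℕ) < 5 <;>
    simp [Qb, h, add_mul, mul_add, Finset.sum_add_distrib] <;> ring

lemma Qb_add_right (v w w' : Fin 13 → ℂ) : Qb B v (w + w') = Qb B v w + Qb B v w' := by
  funext k
  by_cases h : (k : ℕ) < 5 <;>
    simp [Qb, h, add_mul, mul_add, Finset.sum_add_distrib] <;> ring

lemma Qb_smul_left (a : ℂ) (v w : Fin 13 → ℂ) : Qb B (a • v) w = a • Qb B v w := by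
  funext k
  by_cases h : (k : ℕ) < 5
  · simp only [Qb, dif_pos h, Pi.smul_apply, smul_eq_mul, Pi.smul_apply, mul_neg,
      Finset.mul_sum]
    congr 1; apply Finset.sum_congr rfl; intro i _
    apply Finset.sum_congr rfl; intro j _
    by_cases hij : 5 ≤ (i : ℕ) ∧ 5 ≤ (j : ℕ) <;> simp [hij, Pi.smul_apply, smul_eq_mul] <;> ring
  · simp [Qb, h]
lemma Qb_smul_right (a : ℂ) (v w : Fin 13 → ℂ) : Qb B v (a • w) = a • Qb B v w := by
  funext k
  by_cases h : (k : ℕ) < 5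
  · simp only [Qb, dif_pos h, Pi.smul_apply, smul_eq_mul, Pi.smul_apply, mul_neg,
      Finset.mul_sum]
    congr 1; apply Finset.sum_congr rfl; intro i _
    apply Finset.sum_congr rfl; intro j _
    by_cases hij : 5 ≤ (i : ℕ) ∧ 5 ≤ (j : ℕ) <;> simp [hij, Pi.smul_apply, smul_eq_mul] <;> ring
  · simp [Qb, h]

lemma Qb_zero_left (w : Fin 13 → ℂ) : Qb B 0 w = 0 := by
  funext k; by_cases h : (k : ℕ) < 5 <;> simp [Qb, h]

lemma Qb_zero_right (v : Fin 13 → ℂ) : Qb B v 0 = 0 := by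
  funext k; by_cases h : (k : ℕ) < 5 <;> simp [Qb, h]

lemma Qb_comm (v w : Fin 13 → ℂ) : Qb B v w = Qb B w v := by
  funext k
  by_cases h : (k : ℕ) < 5
  · simp only [Qb, dif_pos h]
    rw [Finset.sum_comm]
    congr 1; apply Finset.sum_congr rfl; intro i _
    apply Finset.sum_congr rfl; intro j _
    by_cases h1 : 5 ≤ (i : ℕ) ∧ 5 ≤ (j : ℕ)
    · rw [if_pos h1, if_pos ⟨h1.2, h1.1⟩, Bs_comm]; ring
    · rw [if_neg h1, if_neg (fun hc => h1 ⟨hc.2, hc.1⟩)]; ring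
  · simp [Qb, h]

lemma Qb_supp_left (v w : Fin 13 → ℂ) (hv : ∀ l : Fin 13, 5 ≤ (l : ℕ) → v l = 0) :
    Qb B v w = 0 := by
  funext k
  by_cases h : (k : ℕ) < 5
  · simp only [Qb, dif_pos h, Pi.zero_apply, neg_eq_zero]
    apply Finset.sum_eq_zero; intro i _
    apply Finset.sum_eq_zero; intro j _
    by_cases hi : 5 ≤ (i : ℕ)
    · rw [hv i hi]; ring
    · simp [hi]
  · simp [Qb, h]

lemma Qb_apply_ge (v w : Fin 13 → ℂ) (k : Fin 13) (h : ¬ (k : ℕ) < 5) : Qb B v w k = 0 := by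
  simp [Qb, h]

lemma Qb_qb_left (u v w : Fin 13 → ℂ) : Qb B (Qb B u v) w = 0 :=
  Qb_supp_left _ _ (fun l hl => Qb_apply_ge _ _ _ (by omega))

/-- The 14-dimensional algebra ℂ ⊕ ℂ¹³ with multiplication twisted by B. -/
@[ext]
structure Alg (B : Fin 13 → Fin 13 → Fin 5 → ℂ) where
  c : ℂ
  v : Fin 13 → ℂ

namespace Alg

instance : Add (Alg B) := ⟨fun x y => ⟨x.c + y.c, x.v + y.v⟩⟩
instance : Zero (Alg B) := ⟨⟨0, 0⟩⟩
instance : Neg (Alg B) := ⟨fun x => ⟨-x.c, -x.v⟩⟩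
noncomputable instance : Mul (Alg B) := ⟨fun x y => ⟨x.c * y.c, x.c • y.v + y.c • x.v + Qb B x.v y.v⟩⟩
instance : One (Alg B) := ⟨⟨1, 0⟩⟩

@[simp] lemma add_c (x y : Alg B) : (x + y).c = x.c + y.c := rfl
@[simp] lemma add_v (x y : Alg B) : (x + y).v = x.v + y.v := rfl
@[simp] lemma zero_c : (0 : Alg B).c = 0 := rfl
@[simp] lemma zero_v : (0 : Alg B).v = 0 := rfl
@[simp] lemma neg_c (x : Alg B) : (-x).c = -x.c := rfl
@[simp] lemma neg_v (x : Alg B) : (-x).v = -x.v := rfl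
@[simp] lemma mul_c (x y : Alg B) : (x * y).c = x.c * y.c := rfl
@[simp] lemma mul_v (x y : Alg B) : (x * y).v = x.c • y.v + y.c • x.v + Qb B x.v y.v := rfl
@[simp] lemma one_c : (1 : Alg B).c = 1 := rfl
@[simp] lemma one_v : (1 : Alg B).v = 0 := rfl

instance : AddCommGroup (Alg B) where
  add_assoc x y z := by ext <;> simp [add_assoc]
  zero_add x := by ext <;> simp
  add_zero x := by ext <;> simp
  add_comm x y := by ext <;> simp [add_comm]
  neg_add_cancel x := by ext <;> simp
  nsmul := nsmulRec
  zsmul := zsmulRec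

noncomputable instance : CommRing (Alg B) := {
  (inferInstance : AddCommGroup (Alg B)) with
  mul := (· * ·)
  one := 1
  mul_comm := fun x y => by
    refine Alg.ext (mul_comm _ _) ?_
    simp only [mul_v, Qb_comm (B := B) x.v y.v]
    abel
  mul_assoc := fun x y z => by
    refine Alg.ext (mul_assoc _ _ _) ?_
    simp only [mul_v, mul_c, Qb_add_left, Qb_add_right, Qb_smul_left, Qb_smul_right,
      Qb_qb_left, smul_add]
    rw [Qb_comm (B := B) x.v (Qb B y.v z.v), Qb_qb_left]
    funext k
    simp only [Pi.add_apply, Pi.zero_apply, Pi.smul_apply, smul_eq_mul]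
    ring
  one_mul := fun x => by refine Alg.ext (one_mul _) ?_; simp [Qb_zero_left]
  mul_one := fun x => by refine Alg.ext (mul_one _) ?_; simp [Qb_zero_right]
  left_distrib := fun x y z => by
    refine Alg.ext (mul_add _ _ _) ?_
    simp only [mul_v, add_v, add_c, Qb_add_right, smul_add, add_smul]
    funext k
    simp only [Pi.add_apply, Pi.smul_apply, smul_eq_mul]
    ring
  right_distrib := fun x y z => by
    refine Alg.ext (add_mul _ _ _) ?_
    simp only [mul_v, add_v, add_c, Qb_add_left, smul_add, add_smul]
    funext k
    simp only [Pi.add_apply, Pi.smul_apply, smul_eq_mul]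
    ring
  zero_mul := fun x => by refine Alg.ext (zero_mul _) ?_; simp [Qb_zero_left]
  mul_zero := fun x => by refine Alg.ext (mul_zero _) ?_; simp [Qb_zero_right] }

/-- The structure map ℂ → Alg B. -/
noncomputable def toA : ℂ →+* Alg B where
  toFun a := ⟨a, 0⟩
  map_one' := rfl
  map_mul' a b := by ext <;> simp [Qb_zero_left]
  map_zero' := rfl
  map_add' a b := by ext <;> simp

noncomputable instance : Algebra ℂ (Alg B) := (Alg.toA (B := B)).toAlgebra

@[simp] lemma algebraMap_c (a : ℂ) : (algebraMap ℂ (Alg B) a).c = a := rfl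
@[simp] lemma algebraMap_v (a : ℂ) : (algebraMap ℂ (Alg B) a).v = 0 := rfl

@[simp] lemma smul_c (a : ℂ) (x : Alg B) : (a • x).c = a * x.c := by
  show ((toA a) * x).c = a * x.c
  simp [toA]

@[simp] lemma smul_v (a : ℂ) (x : Alg B) : (a • x).v = a • x.v := by
  show ((toA a) * x).v = a • x.v
  simp [toA, Qb_zero_left]

end Alg

/-- Images of the variables in Alg B. -/
noncomputable def gen (B : Fin 13 → Fin 13 → Fin 5 → ℂ) (i : Fin 13) : Alg B :=
  ⟨0, Pi.single i 1⟩

lemma gen_mul (i j : Fin 13) :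
    gen B i * gen B j = ⟨0, Qb B (Pi.single i 1) (Pi.single j 1)⟩ := by
  refine Alg.ext ?_ ?_ <;> simp [gen, Alg.mul_c, Alg.mul_v]

lemma Qb_single (i j k : Fin 13) (h : (k : ℕ) < 5) :
    Qb B (Pi.single i 1) (Pi.single j 1) k
      = -(if 5 ≤ (i : ℕ) ∧ 5 ≤ (j : ℕ) then Bs B i j ⟨k, h⟩ else 0) := by
  simp only [Qb, dif_pos h, neg_inj]
  rw [Finset.sum_eq_single i]
  · rw [Finset.sum_eq_single j] <;> simp +contextual [Pi.single_apply]
  · intro b _ hb; simp [Pi.single_apply, hb]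
  · simp

lemma sum_mk0 {ι : Type*} (s : Finset ι) (f : ι → Fin 13 → ℂ) :
    (∑ t ∈ s, (⟨0, f t⟩ : Alg B)) = ⟨0, ∑ t ∈ s, f t⟩ := by
  induction s using Finset.cons_induction with
  | empty => rfl
  | cons a s ha ih =>
    rw [Finset.sum_cons, Finset.sum_cons, ih]
    refine Alg.ext (by simp) (by simp)

lemma aeval_linPart (i j : Fin 13) :
    aeval (gen B) (linPart B i j)
      = ⟨0, fun k => if h : (k : ℕ) < 5 then B i j ⟨k, h⟩ else 0⟩ := by
  have h5 : (5:ℕ) ≤ 13 := by norm_num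
  have step : ∀ t : Fin 5,
      aeval (gen B) (C (B i j t) * X (Fin.castLE h5 t))
        = (⟨0, B i j t • (Pi.single (Fin.castLE h5 t) (1:ℂ) : Fin 13 → ℂ)⟩ : Alg B) := by
    intro t
    rw [map_mul, aeval_C, aeval_X]
    refine Alg.ext ?_ ?_
    · show (algebraMap ℂ (Alg B) (B i j t) * gen B _).c = 0
      simp [gen]
    · show (algebraMap ℂ (Alg B) (B i j t) * gen B _).v = _
      simp [gen, Qb_zero_left]
  rw [linPart, map_sum, Finset.sum_congr rfl (fun t _ => step t), sum_mk0]
  refine Alg.ext rfl ?_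
  funext k
  simp only [Finset.sum_apply, Pi.smul_apply, Pi.single_apply, smul_eq_mul, mul_ite,
    mul_one, mul_zero]
  by_cases h : (k : ℕ) < 5
  · rw [dif_pos h, Finset.sum_eq_single ⟨k.1, h⟩]
    · rw [if_pos (by ext; simp)]
    · intro b _ hb
      rw [if_neg]
      intro hc
      exact hb (by ext; simpa [Fin.ext_iff] using hc.symm)
    · simp
  · rw [dif_neg h]
    apply Finset.sum_eq_zero
    intro b _
    rw [if_neg]
    intro hc
    apply h
    have : ((Fin.castLE h5 b : Fin 13) : ℕ) = (k : ℕ) := by rw [hc]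
    simp at this
    omega

lemma phi_gen1 (i j : Fin 13) (h5 : 5 ≤ (i : ℕ)) (hij : i ≤ j) :
    aeval (gen B) (X i * X j + linPart B i j) = 0 := by
  rw [map_add, map_mul, aeval_X, aeval_X, gen_mul, aeval_linPart]
  refine Alg.ext (by simp) ?_
  show Qb B (Pi.single i 1) (Pi.single j 1) + _ = 0
  funext k
  by_cases h : (k : ℕ) < 5
  · have hj : 5 ≤ (j : ℕ) := le_trans h5 hij
    simp only [Pi.add_apply, Qb_single i j k h, Pi.zero_apply, dif_pos h, Bs, if_pos hij]
    rw [if_pos (And.intro h5 hj)]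
    ring
  · simp only [Pi.add_apply, Qb_apply_ge _ _ _ h, Pi.zero_apply, dif_neg h, add_zero]

lemma phi_gen2 (i j : Fin 13) (hi : (i : ℕ) < 5) :
    aeval (R := ℂ) (gen B) (X i * X j) = 0 := by
  rw [map_mul, aeval_X (R := ℂ), aeval_X (R := ℂ), gen_mul]
  refine Alg.ext (by simp) ?_
  show Qb B (Pi.single i 1) (Pi.single j 1) = 0
  apply Qb_supp_left
  intro l hl
  rw [Pi.single_apply, if_neg]
  intro hc
  subst hc
  omega

lemma phi_gen3 (i j k : Fin 13) :
    aeval (R := ℂ) (gen B) (X i * X j * X k) = 0 := by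
  rw [map_mul, map_mul, aeval_X (R := ℂ), aeval_X (R := ℂ), aeval_X (R := ℂ), gen_mul]
  refine Alg.ext (by simp) ?_
  show (0:ℂ) • _ + (gen B k).c • _ + Qb B (Qb B (Pi.single i 1) (Pi.single j 1)) _ = 0
  rw [Qb_supp_left _ _ (fun l hl => Qb_apply_ge _ _ _ (by omega))]
  simp [gen]

lemma idealB_le_ker : idealB B ≤ RingHom.ker (aeval (gen B) : MvPolynomial (Fin 13) ℂ →ₐ[ℂ] Alg B).toRingHom := by
  rw [idealB, Ideal.span_le]
  rintro f ((⟨i, j, h5, hij, rfl⟩ | ⟨i, j, hi, rfl⟩) | ⟨i, j, k, rfl⟩)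
  · exact phi_gen1 i j h5 hij
  · exact phi_gen2 i j hi
  · exact phi_gen3 i j k

noncomputable def psi : (MvPolynomial (Fin 13) ℂ ⧸ idealB B) →ₐ[ℂ] Alg B :=
  Ideal.Quotient.liftₐ (idealB B) (aeval (gen B))
    (fun a ha => RingHom.mem_ker.mp (idealB_le_ker ha))

lemma psi_mk (p : MvPolynomial (Fin 13) ℂ) :
    psi (B := B) (Ideal.Quotient.mk (idealB B) p) = aeval (gen B) p := by
  simp [psi]; rfl

lemma indep :
    LinearIndependent ℂ
      (fun o : Option (Fin 13) => Ideal.Quotient.mk (idealB B) (o.elim 1 X)) := by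
  apply LinearIndependent.of_comp (psi (B := B)).toLinearMap
  have hcomp : ((psi (B := B)).toLinearMap ∘
      fun o : Option (Fin 13) => Ideal.Quotient.mk (idealB B) (o.elim 1 X))
      = fun o : Option (Fin 13) => o.elim 1 (gen B) := by
    funext o
    cases o with
    | none => simp [psi_mk]
    | some i => simp [psi_mk]
  rw [hcomp, Fintype.linearIndependent_iff]
  intro g hg
  have hsummand : ∀ i : Fin 13, g (some i) • gen B i
      = (⟨0, g (some i) • (Pi.single i 1 : Fin 13 → ℂ)⟩ : Alg B) := by
    intro i
    refine Alg.ext (by simp [gen]) (by simp [gen])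
  rw [Fintype.sum_option] at hg
  simp only [Option.elim] at hg
  rw [Finset.sum_congr rfl (fun i _ => hsummand i), sum_mk0] at hg
  have hone : g none • (1 : Alg B) = (⟨g none, 0⟩ : Alg B) :=
    Alg.ext (by simp) (by simp)
  rw [hone] at hg
  have hc : g none = 0 := by
    have := congrArg Alg.c hg
    simpa using this
  have hv : ∀ i : Fin 13, g (some i) = 0 := by
    intro i
    have := congrArg (fun x => Alg.v x i) hg
    simpa [Finset.sum_apply, Pi.single_apply] using this
  intro o
  cases o with
  | none => exact hc
  | some i => exact hv i

lemma quad_mem_le (i j : Fin 13) (hij : i ≤ j) :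
    Ideal.Quotient.mk (idealB B) (X i * X j) ∈
      Submodule.span ℂ (Set.range
        (fun o : Option (Fin 13) => Ideal.Quotient.mk (idealB B) (o.elim 1 X))) := by
  by_cases hi : (i : ℕ) < 5
  · have hmem : X i * X j ∈ idealB B := by
      rw [idealB]
      exact Ideal.subset_span (Or.inl (Or.inr ⟨i, j, hi, rfl⟩))
    rw [Ideal.Quotient.eq_zero_iff_mem.mpr hmem]
    exact Submodule.zero_mem _
  · push_neg at hi
    have hmem : X i * X j + linPart B i j ∈ idealB B := by
      rw [idealB]
      exact Ideal.subset_span (Or.inl (Or.inl ⟨i, j, hi, hij, rfl⟩))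
    have hg : Ideal.Quotient.mk (idealB B) (X i * X j + linPart B i j) = 0 :=
      Ideal.Quotient.eq_zero_iff_mem.mpr hmem
    rw [map_add] at hg
    rw [eq_neg_of_add_eq_zero_left hg]
    apply Submodule.neg_mem
    rw [linPart, map_sum]
    apply Submodule.sum_mem
    intro t _
    rw [map_mul]
    have hca : Ideal.Quotient.mk (idealB B) (C (B i j t)) =
        algebraMap ℂ _ (B i j t) := by
      rw [← MvPolynomial.algebraMap_eq, ← Ideal.Quotient.mkₐ_eq_mk ℂ]
      exact (Ideal.Quotient.mkₐ ℂ (idealB B)).commutes _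
    rw [hca, ← Algebra.smul_def]
    exact Submodule.smul_mem _ _
      (Submodule.subset_span ⟨some (Fin.castLE (by norm_num) t), rfl⟩)

lemma quad_mem (i j : Fin 13) :
    Ideal.Quotient.mk (idealB B) (X i * X j) ∈
      Submodule.span ℂ (Set.range
        (fun o : Option (Fin 13) => Ideal.Quotient.mk (idealB B) (o.elim 1 X))) := by
  rcases le_total i j with h | h
  · exact quad_mem_le i j h
  · rw [mul_comm]
    exact quad_mem_le j i h

lemma span_top :
    Submodule.span ℂ (Set.range
      (fun o : Option (Fin 13) => Ideal.Quotient.mk (idealB B) (o.elim 1 X))) = ⊤ := by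
  set S := Submodule.span ℂ (Set.range
    (fun o : Option (Fin 13) => Ideal.Quotient.mk (idealB B) (o.elim 1 X))) with hS
  have hmulX : ∀ s ∈ S, ∀ n : Fin 13, s * Ideal.Quotient.mk (idealB B) (X n) ∈ S := by
    intro s hs n
    induction hs using Submodule.span_induction with
    | mem x hx =>
      obtain ⟨o, rfl⟩ := hx
      cases o with
      | none =>
        simp only [Option.elim, map_one, one_mul]
        exact Submodule.subset_span ⟨some n, rfl⟩
      | some i =>
        rw [← map_mul]
        exact quad_mem i n
    | zero => simpa using Submodule.zero_mem S
    | add x y _ _ hx hy => rw [add_mul]; exact Submodule.add_mem _ hx hy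
    | smul a x _ hx => rw [smul_mul_assoc]; exact Submodule.smul_mem _ _ hx
  rw [eq_top_iff]
  rintro q -
  obtain ⟨p, rfl⟩ := Ideal.Quotient.mk_surjective q
  induction p using MvPolynomial.induction_on with
  | C a =>
    have : Ideal.Quotient.mk (idealB B) (C a) = a • (1 : MvPolynomial (Fin 13) ℂ ⧸ idealB B) := by
      rw [← MvPolynomial.algebraMap_eq, ← Ideal.Quotient.mkₐ_eq_mk ℂ,
        (Ideal.Quotient.mkₐ ℂ (idealB B)).commutes, Algebra.algebraMap_eq_smul_one]
    rw [this]
    exact Submodule.smul_mem _ _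
      (Submodule.subset_span ⟨none, by simp⟩)
  | add p q hp hq => rw [map_add]; exact Submodule.add_mem _ hp hq
  | mul_X p n hp => rw [map_mul]; exact hmulX _ hp n

/-- Each I_B has colength 14, and the images of {1, x₁, ..., x₁₃} form a
ℂ-basis of the quotient ring. -/
theorem idealB_colength_and_basis (B : Fin 13 → Fin 13 → Fin 5 → ℂ) :
    Module.finrank ℂ (MvPolynomial (Fin 13) ℂ ⧸ idealB B) = 14 ∧
    LinearIndependent ℂ
      (fun o : Option (Fin 13) => Ideal.Quotient.mk (idealB B) (o.elim 1 X)) ∧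
    Submodule.span ℂ
      (Set.range
        (fun o : Option (Fin 13) => Ideal.Quotient.mk (idealB B) (o.elim 1 X)))
      = ⊤ := by
  have hindep := indep (B := B)
  have hspan := span_top (B := B)
  refine ⟨?_, hindep, hspan⟩
  have b : Module.Basis (Option (Fin 13)) ℂ (MvPolynomial (Fin 13) ℂ ⧸ idealB B) :=
    Module.Basis.mk hindep (le_of_eq hspan.symm)
  rw [Module.finrank_eq_card_basis b]
  simp
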